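/- Let L > 0 and let p, q : ℝ → ℝ be continuous with (1/t)∫_0^t p(τ) dτ → 0 and (1/t)∫_0^t q(τ) dτ → 0 as t → +∞. For κ ∈ ℝ and t ≥ 0 define the symmetric 2×2 matrix B_κ(t) with entries B_κ(t)₁₁ = (−2L − κ)t + ∫_0^t p(τ) dτ, B_κ(t)₂₂ = (−2L − κ)t + ∫_0^t q(τ) dτ, and B_κ(t)₁₂ = B_κ(t)₂₁ = κt. Then there exists T > 0 such that for all t ≥ T, all κ ≥ 1, and all m ∈ ℝ², ‖exp(B_κ(t)) · m‖ ≤ e^{−Lt} ‖m‖, where exp is the matrix exponential and ‖·‖ the Euclidean norm on ℝ². -/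

import Mathlib

open Real Matrix Filter

lemma dot_mulVec_self {n : Type*} [Fintype n] [DecidableEq n] (U : Matrix n n ℝ)
    (h : Uᵀ * U = 1) (x : n → ℝ) : (U *ᵥ x) ⬝ᵥ (U *ᵥ x) = x ⬝ᵥ x := by
  rw [Matrix.dotProduct_mulVec, ← Matrix.mulVec_transpose, Matrix.mulVec_mulVec, h,
    Matrix.one_mulVec]

lemma exp_sym_bound {n : Type*} [Fintype n] [DecidableEq n] (A : Matrix n n ℝ)
    (hA : A.IsHermitian) (β : ℝ) (hev : ∀ i, hA.eigenvalues i ≤ β) (v : n → ℝ) :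
    ((NormedSpace.exp A) *ᵥ v) ⬝ᵥ ((NormedSpace.exp A) *ᵥ v)
      ≤ Real.exp β ^ 2 * (v ⬝ᵥ v) := by
  set U : Matrix n n ℝ := (hA.eigenvectorUnitary : Matrix n n ℝ) with hUdef
  have hmem := hA.eigenvectorUnitary.2
  have h1 : star U * U = 1 := hmem.1
  have h2 : U * star U = 1 := hmem.2
  have hstar : star U = Uᵀ := by
    ext i j; simp [Matrix.conjTranspose_apply]
  have hexp : NormedSpace.exp A
      = U * Matrix.diagonal (fun i => Real.exp (hA.eigenvalues i)) * star U := by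
    have hinv : U⁻¹ = star U := Matrix.inv_eq_left_inv h1
    conv_lhs => rw [hA.spectral_theorem, Unitary.conjStarAlgAut_apply, ← hUdef, ← hinv]
    rw [Matrix.exp_conj _ _ ⟨⟨U, star U, h2, h1⟩, rfl⟩, hinv, Matrix.exp_diagonal]
    have : NormedSpace.exp (RCLike.ofReal ∘ hA.eigenvalues : n → ℝ)
        = fun i => Real.exp (hA.eigenvalues i) := by
      rw [Pi.exp_def]
      funext i
      simp [Real.exp_eq_exp_ℝ]
    rw [this]
  set w : n → ℝ := (star U) *ᵥ v with hwdef
  have hw : w ⬝ᵥ w = v ⬝ᵥ v := by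
    rw [hwdef, hstar]
    exact dot_mulVec_self Uᵀ (by rw [Matrix.transpose_transpose, ← hstar, h2]) v
  have hstep : (NormedSpace.exp A) *ᵥ v
      = U *ᵥ ((Matrix.diagonal (fun i => Real.exp (hA.eigenvalues i))) *ᵥ w) := by
    rw [hexp, hwdef, ← Matrix.mulVec_mulVec, ← Matrix.mulVec_mulVec]
  rw [hstep, dot_mulVec_self U (by rw [← hstar, h1]) _]
  have hdiag : ∀ i, ((Matrix.diagonal (fun i => Real.exp (hA.eigenvalues i))) *ᵥ w) i
      = Real.exp (hA.eigenvalues i) * w i := by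
    intro i; rw [Matrix.mulVec_diagonal]
  calc ((Matrix.diagonal (fun i => Real.exp (hA.eigenvalues i))) *ᵥ w) ⬝ᵥ
        ((Matrix.diagonal (fun i => Real.exp (hA.eigenvalues i))) *ᵥ w)
      = ∑ i, (Real.exp (hA.eigenvalues i) * w i) * (Real.exp (hA.eigenvalues i) * w i) := by
        simp [dotProduct, hdiag]
    _ ≤ ∑ i, Real.exp β ^ 2 * (w i * w i) := by
        apply Finset.sum_le_sum
        intro i _
        have h := Real.exp_le_exp.mpr (hev i)
        have h2 : Real.exp (hA.eigenvalues i) ^ 2 ≤ Real.exp β ^ 2 :=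
          pow_le_pow_left₀ (Real.exp_pos _).le h 2
        nlinarith [mul_self_nonneg (w i)]
    _ = Real.exp β ^ 2 * (w ⬝ᵥ w) := by rw [dotProduct, Finset.mul_sum]
    _ = Real.exp β ^ 2 * (v ⬝ᵥ v) := by rw [hw]

-- eigenvalue bound via Rayleigh quotient, 2x2 case
lemma eigen_bound (A : Matrix (Fin 2) (Fin 2) ℝ) (hA : A.IsHermitian) (M c : ℝ)
    (h00 : A 0 0 ≤ M) (h11 : A 1 1 ≤ M) (h01 : A 0 1 = c) (h10 : A 1 0 = c)
    (hc : 0 ≤ c) (i : Fin 2) : hA.eigenvalues i ≤ M + c := by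
  have hv := hA.eigenvalues_eq i
  set x : ℝ := hA.eigenvectorBasis i 0 with hx
  set y : ℝ := hA.eigenvectorBasis i 1 with hy
  have hnorm : ‖hA.eigenvectorBasis i‖ = 1 := hA.eigenvectorBasis.orthonormal.1 i
  have hxy : x ^ 2 + y ^ 2 = 1 := by
    have h := congrArg (· ^ 2) hnorm
    simp only [EuclideanSpace.norm_eq, Real.norm_eq_abs, one_pow] at h
    rw [Real.sq_sqrt (by positivity)] at h
    simpa [Fin.sum_univ_two, sq_abs] using h
  have hval : hA.eigenvalues i = x * (A 0 0 * x + A 0 1 * y) + y * (A 1 0 * x + A 1 1 * y) := by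
    rw [hv]
    simp [dotProduct, Matrix.mulVec, Fin.sum_univ_two]
    rfl
  have key : x * (A 0 0 * x + c * y) + y * (c * x + A 1 1 * y) ≤ (M + c) * (x ^ 2 + y ^ 2) := by
    nlinarith [mul_le_mul_of_nonneg_right h00 (sq_nonneg x),
      mul_le_mul_of_nonneg_right h11 (sq_nonneg y),
      mul_nonneg hc (sq_nonneg (x - y))]
  rw [hxy, mul_one] at key
  rw [hval, h01, h10]
  exact key


/-- Uniform exponential estimate for the matrix exponential of the integrated
coefficient matrix of the coupled system: there is `T > 0` such that for all
`t ≥ T` and all coupling intensities `κ ≥ 1`,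
`‖exp(B_κ(t)) m‖ ≤ e^{−Lt} ‖m‖` in the Euclidean norm on `ℝ²`. -/
theorem stmt_18 (L : ℝ) (hL : 0 < L) (p q : ℝ → ℝ)
    (hp : Continuous p) (hq : Continuous q)
    (hpavg : Tendsto (fun t : ℝ => (1 / t) * ∫ τ in (0:ℝ)..t, p τ) atTop (nhds 0))
    (hqavg : Tendsto (fun t : ℝ => (1 / t) * ∫ τ in (0:ℝ)..t, q τ) atTop (nhds 0))
    (B : ℝ → ℝ → Matrix (Fin 2) (Fin 2) ℝ)
    (hB11 : ∀ κ t, B κ t 0 0 = (-(2 * L) - κ) * t + ∫ τ in (0:ℝ)..t, p τ)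
    (hB22 : ∀ κ t, B κ t 1 1 = (-(2 * L) - κ) * t + ∫ τ in (0:ℝ)..t, q τ)
    (hB12 : ∀ κ t, B κ t 0 1 = κ * t)
    (hB21 : ∀ κ t, B κ t 1 0 = κ * t) :
    ∃ T > 0, ∀ t : ℝ, T ≤ t → ∀ κ : ℝ, 1 ≤ κ →
      ∀ m : EuclideanSpace ℝ (Fin 2),
        ‖(EuclideanSpace.equiv (Fin 2) ℝ).symm
            ((NormedSpace.exp (B κ t)).mulVec (EuclideanSpace.equiv (Fin 2) ℝ m))‖ ≤
          Real.exp (-(L * t)) * ‖m‖ := by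
  have hpev : ∀ᶠ t in atTop, |(1 / t) * ∫ τ in (0:ℝ)..t, p τ| < L := by
    have := hpavg (Metric.ball_mem_nhds (0:ℝ) hL)
    filter_upwards [this] with t ht
    rw [Set.mem_preimage, Metric.mem_ball, Real.dist_eq, sub_zero] at ht
    exact ht
  have hqev : ∀ᶠ t in atTop, |(1 / t) * ∫ τ in (0:ℝ)..t, q τ| < L := by
    have := hqavg (Metric.ball_mem_nhds (0:ℝ) hL)
    filter_upwards [this] with t ht
    rw [Set.mem_preimage, Metric.mem_ball, Real.dist_eq, sub_zero] at ht
    exact ht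
  obtain ⟨T₀, hT₀⟩ := eventually_atTop.mp ((hpev.and hqev).and (eventually_ge_atTop (1:ℝ)))
  refine ⟨max T₀ 1, lt_of_lt_of_le one_pos (le_max_right _ _), ?_⟩
  intro t ht κ hκ m
  have htT₀ : T₀ ≤ t := le_trans (le_max_left _ _) ht
  obtain ⟨⟨hpt, hqt⟩, ht1⟩ := hT₀ t htT₀
  have htpos : 0 < t := lt_of_lt_of_le one_pos ht1
  -- integral bounds
  have hPb : (∫ τ in (0:ℝ)..t, p τ) ≤ L * t := by
    have h1 : |∫ τ in (0:ℝ)..t, p τ| < L * t := by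
      rw [abs_mul, abs_of_pos (by positivity : (0:ℝ) < 1 / t)] at hpt
      rw [← div_lt_iff₀ htpos] at *
      calc |∫ τ in (0:ℝ)..t, p τ| / t = 1 / t * |∫ τ in (0:ℝ)..t, p τ| := by ring
        _ < L := hpt
    exact le_of_lt (lt_of_le_of_lt (le_abs_self _) h1)
  have hQb : (∫ τ in (0:ℝ)..t, q τ) ≤ L * t := by
    have h1 : |∫ τ in (0:ℝ)..t, q τ| < L * t := by
      rw [abs_mul, abs_of_pos (by positivity : (0:ℝ) < 1 / t)] at hqt
      rw [← div_lt_iff₀ htpos] at *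
      calc |∫ τ in (0:ℝ)..t, q τ| / t = 1 / t * |∫ τ in (0:ℝ)..t, q τ| := by ring
        _ < L := hqt
    exact le_of_lt (lt_of_le_of_lt (le_abs_self _) h1)
  set A := B κ t with hAdef
  have hA : A.IsHermitian := by
    unfold Matrix.IsHermitian
    ext i j
    rw [Matrix.conjTranspose_apply]
    fin_cases i <;> fin_cases j <;>
      simp [hAdef, hB11, hB22, hB12, hB21]
  have hev : ∀ i, hA.eigenvalues i ≤ -(L * t) := by
    intro i
    have := eigen_bound A hA ((-(2 * L) - κ) * t + L * t) (κ * t)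
      (by rw [hAdef, hB11]; linarith)
      (by rw [hAdef, hB22]; linarith)
      (hB12 κ t) (hB21 κ t)
      (by positivity : (0:ℝ) ≤ κ * t) i
    have heq : (-(2 * L) - κ) * t + L * t + κ * t = -(L * t) := by ring
    linarith [this, heq.le]
  have key := exp_sym_bound A hA (-(L * t)) hev (EuclideanSpace.equiv (Fin 2) ℝ m)
  -- convert to norms
  rw [EuclideanSpace.norm_eq, EuclideanSpace.norm_eq]
  have hLHS : ∑ i, ‖((EuclideanSpace.equiv (Fin 2) ℝ).symm
      ((NormedSpace.exp A).mulVec (EuclideanSpace.equiv (Fin 2) ℝ m))) i‖ ^ 2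
      = ((NormedSpace.exp A) *ᵥ (EuclideanSpace.equiv (Fin 2) ℝ m)) ⬝ᵥ
        ((NormedSpace.exp A) *ᵥ (EuclideanSpace.equiv (Fin 2) ℝ m)) := by
    simp [dotProduct, Real.norm_eq_abs, sq_abs, pow_two]
  have hRHS : ∑ i, ‖m i‖ ^ 2
      = (EuclideanSpace.equiv (Fin 2) ℝ m) ⬝ᵥ (EuclideanSpace.equiv (Fin 2) ℝ m) := by
    simp [dotProduct, Real.norm_eq_abs, sq_abs, pow_two]
  rw [hLHS, hRHS]
  have h2 : Real.sqrt (((NormedSpace.exp A) *ᵥ (EuclideanSpace.equiv (Fin 2) ℝ m)) ⬝ᵥ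
        ((NormedSpace.exp A) *ᵥ (EuclideanSpace.equiv (Fin 2) ℝ m)))
      ≤ Real.sqrt (Real.exp (-(L * t)) ^ 2 *
        ((EuclideanSpace.equiv (Fin 2) ℝ m) ⬝ᵥ (EuclideanSpace.equiv (Fin 2) ℝ m))) :=
    Real.sqrt_le_sqrt key
  refine h2.trans (le_of_eq ?_)
  rw [Real.sqrt_mul (sq_nonneg _), Real.sqrt_sq (Real.exp_pos _).le]
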